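/- Let G₁, G₂ be locally finite simple graphs, x ∈ V₁, y ∈ V₂, and N₁, N₂ ∈ (0,∞]. Then the Cartesian product satisfies K_{G₁×G₂,(x,y)}(N₁+N₂) ≥ min{K_{G₁,x}(N₁), K_{G₂,y}(N₂)}. -/

import Mathlib

open Finset Filter Topology ENNReal SimpleGraph

noncomputable instance (priority := low) finLocFin {V : Type*} [Finite V] (G : SimpleGraph V) :
    G.LocallyFinite := fun _ => Fintype.ofFinite _

/-- Non-normalized graph Laplacian. -/
noncomputable def lap {V : Type*} (G : SimpleGraph V) [G.LocallyFinite] (f : V → ℝ) (x : V) : ℝ :=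
  ∑ y ∈ G.neighborFinset x, (f y - f x)

/-- Bakry–Émery Γ operator. -/
noncomputable def gam {V : Type*} (G : SimpleGraph V) [G.LocallyFinite] (f g : V → ℝ) (x : V) : ℝ :=
  (lap G (fun v => f v * g v) x - f x * lap G g x - g x * lap G f x) / 2

/-- Bakry–Émery Γ₂ operator. -/
noncomputable def gam2 {V : Type*} (G : SimpleGraph V) [G.LocallyFinite] (f g : V → ℝ) (x : V) : ℝ :=
  (lap G (gam G f g) x - gam G f (lap G g) x - gam G (lap G f) g x) / 2

/-- The coefficient 1/N for N ∈ (0,∞], with 1/∞ = 0. -/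
noncomputable def invN (N : ℝ≥0∞) : ℝ := (N⁻¹).toReal

/-- The vertex `x` satisfies the curvature-dimension inequality CD(K,N). -/
def CD {V : Type*} (G : SimpleGraph V) [G.LocallyFinite] (K : ℝ) (N : ℝ≥0∞) (x : V) : Prop :=
  ∀ f : V → ℝ, gam2 G f f x ≥ invN N * (lap G f x) ^ 2 + K * gam G f f x

lemma lap_add {V : Type*} (G : SimpleGraph V) [G.LocallyFinite] (f g : V → ℝ) (x : V) :
    lap G (fun v => f v + g v) x = lap G f x + lap G g x := by
  unfold lap; rw [← Finset.sum_add_distrib]; exact Finset.sum_congr rfl fun v _ => by ring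
lemma gam_sum {V : Type*} (G : SimpleGraph V) [G.LocallyFinite] (f g : V → ℝ) (x : V) :
    gam G f g x = (∑ v ∈ G.neighborFinset x, (f v - f x) * (g v - g x)) / 2 := by
  unfold gam lap
  rw [Finset.mul_sum, Finset.mul_sum, ← Finset.sum_sub_distrib, ← Finset.sum_sub_distrib]
  congr 1; exact Finset.sum_congr rfl fun v _ => by ring
lemma gam_comm {V : Type*} (G : SimpleGraph V) [G.LocallyFinite] (f g : V → ℝ) (x : V) :
    gam G f g x = gam G g f x := by
  rw [gam_sum, gam_sum]; congr 1; exact Finset.sum_congr rfl fun v _ => by ring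
lemma gam_add_right {V : Type*} (G : SimpleGraph V) [G.LocallyFinite] (f g h : V → ℝ) (x : V) :
    gam G f (fun v => g v + h v) x = gam G f g x + gam G f h x := by
  rw [gam_sum, gam_sum, gam_sum, ← add_div, ← Finset.sum_add_distrib]
  congr 1; exact Finset.sum_congr rfl fun v _ => by ring
lemma lap_box {V₁ V₂ : Type*} (G : SimpleGraph V₁) (H : SimpleGraph V₂)
    [G.LocallyFinite] [H.LocallyFinite] [(G.boxProd H).LocallyFinite]
    (F : V₁ × V₂ → ℝ) (x : V₁) (y : V₂) :
    lap (G.boxProd H) F (x, y) = lap G (fun v => F (v, y)) x + lap H (fun w => F (x, w)) y := by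
  classical
  unfold lap
  have hset : (G.boxProd H).neighborFinset (x, y) =
      (G.neighborFinset x).map ⟨fun v => (v, y), fun a b h => by simpa using congrArg Prod.fst h⟩ ∪
      (H.neighborFinset y).map ⟨fun w => (x, w), fun a b h => by simpa using congrArg Prod.snd h⟩ := by
    ext ⟨a, b⟩
    simp only [SimpleGraph.mem_neighborFinset, SimpleGraph.boxProd_adj, Finset.mem_union,
      Finset.mem_map, Function.Embedding.coeFn_mk, Prod.mk.injEq, DFunLike.coe]
    constructor
    · rintro (⟨h, rfl⟩ | ⟨h, rfl⟩)
      · exact Or.inl ⟨a, h, rfl, rfl⟩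
      · exact Or.inr ⟨b, h, rfl, rfl⟩
    · rintro (⟨v, hv, rfl, rfl⟩ | ⟨w, hw, rfl, rfl⟩)
      · exact Or.inl ⟨hv, rfl⟩
      · exact Or.inr ⟨hw, rfl⟩
  have hdisj : Disjoint
      ((G.neighborFinset x).map ⟨fun v => (v, y), fun a b h => by simpa using congrArg Prod.fst h⟩)
      ((H.neighborFinset y).map ⟨fun w => (x, w), fun a b h => by simpa using congrArg Prod.snd h⟩) := by
    rw [Finset.disjoint_left]
    rintro ⟨a, b⟩ h1 h2
    simp only [Finset.mem_map, Function.Embedding.coeFn_mk, SimpleGraph.mem_neighborFinset,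
      Prod.mk.injEq, DFunLike.coe] at h1 h2
    obtain ⟨v, hv, rfl, rfl⟩ := h1
    obtain ⟨w, hw, h, rfl⟩ := h2
    subst h
    exact G.irrefl hv
  rw [hset, Finset.sum_union hdisj, Finset.sum_map, Finset.sum_map]
  simp only [Function.Embedding.coeFn_mk, DFunLike.coe]

lemma gam_box {V₁ V₂ : Type*} (G : SimpleGraph V₁) (H : SimpleGraph V₂)
    [G.LocallyFinite] [H.LocallyFinite] [(G.boxProd H).LocallyFinite]
    (F Φ : V₁ × V₂ → ℝ) (x : V₁) (y : V₂) :
    gam (G.boxProd H) F Φ (x, y) =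
      gam G (fun v => F (v, y)) (fun v => Φ (v, y)) x
        + gam H (fun w => F (x, w)) (fun w => Φ (x, w)) y := by
  unfold gam
  rw [lap_box G H (fun p => F p * Φ p) x y, lap_box G H F x y, lap_box G H Φ x y]
  ring

lemma gam2_box_ge {V₁ V₂ : Type*} (G : SimpleGraph V₁) (H : SimpleGraph V₂)
    [G.LocallyFinite] [H.LocallyFinite] [(G.boxProd H).LocallyFinite]
    (F : V₁ × V₂ → ℝ) (x : V₁) (y : V₂) :
    gam2 G (fun v => F (v, y)) (fun v => F (v, y)) x
      + gam2 H (fun w => F (x, w)) (fun w => F (x, w)) y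
      ≤ gam2 (G.boxProd H) F F (x, y) := by
  classical
  -- split of lap of Gamma
  have hsplit1 : lap (G.boxProd H) (gam (G.boxProd H) F F) (x, y)
      = lap G (gam G (fun v => F (v, y)) (fun v => F (v, y))) x
        + lap G (fun v => gam H (fun w => F (v, w)) (fun w => F (v, w)) y) x
        + (lap H (fun w => gam G (fun v => F (v, w)) (fun v => F (v, w)) x) y
          + lap H (gam H (fun w => F (x, w)) (fun w => F (x, w))) y) := by
    rw [lap_box G H (gam (G.boxProd H) F F) x y]
    rw [show (fun v => gam (G.boxProd H) F F (v, y))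
        = (fun v => gam G (fun v' => F (v', y)) (fun v' => F (v', y)) v
            + gam H (fun w => F (v, w)) (fun w => F (v, w)) y)
      from funext fun v => gam_box G H F F v y]
    rw [show (fun w => gam (G.boxProd H) F F (x, w))
        = (fun w => gam G (fun v => F (v, w)) (fun v => F (v, w)) x
            + gam H (fun w' => F (x, w')) (fun w' => F (x, w')) w)
      from funext fun w => gam_box G H F F x w]
    rw [lap_add, lap_add]
  have hsplit2 : gam (G.boxProd H) F (lap (G.boxProd H) F) (x, y)
      = gam G (fun v => F (v, y)) (lap G (fun v => F (v, y))) x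
        + gam G (fun v => F (v, y)) (fun v => lap H (fun w => F (v, w)) y) x
        + (gam H (fun w => F (x, w)) (fun w => lap G (fun v => F (v, w)) x) y
          + gam H (fun w => F (x, w)) (lap H (fun w => F (x, w))) y) := by
    rw [gam_box G H F (lap (G.boxProd H) F) x y]
    rw [show (fun v => lap (G.boxProd H) F (v, y))
        = (fun v => lap G (fun v' => F (v', y)) v + lap H (fun w => F (v, w)) y)
      from funext fun v => lap_box G H F v y]
    rw [show (fun w => lap (G.boxProd H) F (x, w))
        = (fun w => lap G (fun v => F (v, w)) x + lap H (fun w' => F (x, w')) w)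
      from funext fun w => lap_box G H F x w]
    rw [gam_add_right, gam_add_right]
  -- cross terms as double sums
  have hA : lap G (fun v => gam H (fun w => F (v, w)) (fun w => F (v, w)) y) x
      = ∑ v ∈ G.neighborFinset x, ∑ w ∈ H.neighborFinset y,
          ((F (v, w) - F (v, y)) * (F (v, w) - F (v, y))
            - (F (x, w) - F (x, y)) * (F (x, w) - F (x, y))) / 2 := by
    unfold lap
    refine Finset.sum_congr rfl fun v hv => ?_
    simp only [gam_sum]
    rw [div_sub_div_same, ← Finset.sum_sub_distrib, Finset.sum_div]
  have hB : lap H (fun w => gam G (fun v => F (v, w)) (fun v => F (v, w)) x) y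
      = ∑ v ∈ G.neighborFinset x, ∑ w ∈ H.neighborFinset y,
          ((F (v, w) - F (x, w)) * (F (v, w) - F (x, w))
            - (F (v, y) - F (x, y)) * (F (v, y) - F (x, y))) / 2 := by
    rw [Finset.sum_comm]
    unfold lap
    refine Finset.sum_congr rfl fun w hw => ?_
    simp only [gam_sum]
    rw [div_sub_div_same, ← Finset.sum_sub_distrib, Finset.sum_div]
  have hP : gam G (fun v => F (v, y)) (fun v => lap H (fun w => F (v, w)) y) x
      = ∑ v ∈ G.neighborFinset x, ∑ w ∈ H.neighborFinset y,
          ((F (v, y) - F (x, y)) * ((F (v, w) - F (v, y)) - (F (x, w) - F (x, y)))) / 2 := by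
    rw [gam_sum, Finset.sum_div]
    refine Finset.sum_congr rfl fun v hv => ?_
    unfold lap
    simp only []
    rw [← Finset.sum_sub_distrib, Finset.mul_sum, Finset.sum_div]
  have hQ : gam H (fun w => F (x, w)) (fun w => lap G (fun v => F (v, w)) x) y
      = ∑ v ∈ G.neighborFinset x, ∑ w ∈ H.neighborFinset y,
          ((F (x, w) - F (x, y)) * ((F (v, w) - F (x, w)) - (F (v, y) - F (x, y)))) / 2 := by
    rw [Finset.sum_comm]
    rw [gam_sum, Finset.sum_div]
    refine Finset.sum_congr rfl fun w hw => ?_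
    unfold lap
    simp only []
    rw [← Finset.sum_sub_distrib, Finset.mul_sum, Finset.sum_div]
  have hcross : lap G (fun v => gam H (fun w => F (v, w)) (fun w => F (v, w)) y) x
      + lap H (fun w => gam G (fun v => F (v, w)) (fun v => F (v, w)) x) y
      - 2 * gam G (fun v => F (v, y)) (fun v => lap H (fun w => F (v, w)) y) x
      - 2 * gam H (fun w => F (x, w)) (fun w => lap G (fun v => F (v, w)) x) y
      = ∑ v ∈ G.neighborFinset x, ∑ w ∈ H.neighborFinset y,
          (F (v, w) - F (v, y) - F (x, w) + F (x, y))
            * (F (v, w) - F (v, y) - F (x, w) + F (x, y)) := by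
    rw [hA, hB, hP, hQ, Finset.mul_sum, Finset.mul_sum,
      ← Finset.sum_add_distrib, ← Finset.sum_sub_distrib, ← Finset.sum_sub_distrib]
    refine Finset.sum_congr rfl fun v hv => ?_
    rw [Finset.mul_sum, Finset.mul_sum,
      ← Finset.sum_add_distrib, ← Finset.sum_sub_distrib, ← Finset.sum_sub_distrib]
    refine Finset.sum_congr rfl fun w hw => ?_
    ring
  have hnn : (0:ℝ) ≤ ∑ v ∈ G.neighborFinset x, ∑ w ∈ H.neighborFinset y,
      (F (v, w) - F (v, y) - F (x, w) + F (x, y))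
        * (F (v, w) - F (v, y) - F (x, w) + F (x, y)) :=
    Finset.sum_nonneg fun v _ => Finset.sum_nonneg fun w _ => mul_self_nonneg _
  have hc1 : gam G (lap G (fun v => F (v, y))) (fun v => F (v, y)) x
      = gam G (fun v => F (v, y)) (lap G (fun v => F (v, y))) x := gam_comm ..
  have hc2 : gam H (lap H (fun w => F (x, w))) (fun w => F (x, w)) y
      = gam H (fun w => F (x, w)) (lap H (fun w => F (x, w))) y := gam_comm ..
  have hc3 : gam (G.boxProd H) (lap (G.boxProd H) F) F (x, y)
      = gam (G.boxProd H) F (lap (G.boxProd H) F) (x, y) := gam_comm ..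
  unfold gam2
  rw [hc1, hc2, hc3, hsplit1, hsplit2]
  linarith [hcross, hnn]

lemma gam_nonneg {V : Type*} (G : SimpleGraph V) [G.LocallyFinite] (f : V → ℝ) (x : V) :
    0 ≤ gam G f f x := by
  rw [gam_sum]
  exact div_nonneg (Finset.sum_nonneg fun v _ => mul_self_nonneg _) (by norm_num)


lemma invN_add_le (N₁ N₂ : ℝ≥0∞) (h₁ : 0 < N₁) (h₂ : 0 < N₂) (a b : ℝ) :
    invN (N₁ + N₂) * (a + b) ^ 2 ≤ invN N₁ * a ^ 2 + invN N₂ * b ^ 2 := by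
  have hrw : ∀ N : ℝ≥0∞, invN N = (N.toReal)⁻¹ := fun N => by
    simp [invN, ENNReal.toReal_inv]
  rcases eq_or_ne N₁ ⊤ with rfl | hN₁
  · have e1 : invN (⊤ + N₂) = 0 := by simp [hrw]
    have e2 : invN (⊤ : ℝ≥0∞) = 0 := by simp [hrw]
    rw [e1, e2, zero_mul, zero_mul, zero_add, hrw]
    positivity
  rcases eq_or_ne N₂ ⊤ with rfl | hN₂
  · have e1 : invN (N₁ + ⊤) = 0 := by simp [hrw]
    have e2 : invN (⊤ : ℝ≥0∞) = 0 := by simp [hrw]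
    rw [e1, e2, zero_mul, zero_mul, add_zero, hrw]
    positivity
  · have h1 : 0 < N₁.toReal := ENNReal.toReal_pos h₁.ne' hN₁
    have h2 : 0 < N₂.toReal := ENNReal.toReal_pos h₂.ne' hN₂
    rw [hrw, hrw, hrw, ENNReal.toReal_add hN₁ hN₂]
    rw [inv_eq_one_div, inv_eq_one_div, inv_eq_one_div, div_mul_eq_mul_div, div_mul_eq_mul_div,
      div_mul_eq_mul_div, div_add_div _ _ h1.ne' h2.ne',
      div_le_div_iff₀ (by positivity) (by positivity)]
    nlinarith [sq_nonneg (a * N₂.toReal - b * N₁.toReal), mul_pos h1 h2,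
      mul_pos (mul_pos h1 h2) (add_pos h1 h2)]


theorem stmt_17 {V₁ V₂ : Type*} (G : SimpleGraph V₁) (H : SimpleGraph V₂)
    [G.LocallyFinite] [H.LocallyFinite] [(G.boxProd H).LocallyFinite]
    (x : V₁) (y : V₂) (N₁ N₂ : ℝ≥0∞) (hN₁ : 0 < N₁) (hN₂ : 0 < N₂)
    (k₁ k₂ k : ℝ)
    (hg₁ : IsGreatest {K : ℝ | CD G K N₁ x} k₁)
    (hg₂ : IsGreatest {K : ℝ | CD H K N₂ y} k₂)
    (hg : IsGreatest {K : ℝ | CD (G.boxProd H) K (N₁ + N₂) (x, y)} k) :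
    min k₁ k₂ ≤ k := by
  refine hg.2 ?_
  intro F
  have h1 := hg₁.1 (fun v => F (v, y))
  have h2 := hg₂.1 (fun w => F (x, w))
  have hbox := gam2_box_ge G H F x y
  have hlap := lap_box G H F x y
  have hgam := gam_box G H F F x y
  have hinv := invN_add_le N₁ N₂ hN₁ hN₂ (lap G (fun v => F (v, y)) x)
    (lap H (fun w => F (x, w)) y)
  have hg1 : 0 ≤ gam G (fun v => F (v, y)) (fun v => F (v, y)) x := gam_nonneg ..
  have hg2 : 0 ≤ gam H (fun w => F (x, w)) (fun w => F (x, w)) y := gam_nonneg ..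
  have hm1 : min k₁ k₂ * gam G (fun v => F (v, y)) (fun v => F (v, y)) x
      ≤ k₁ * gam G (fun v => F (v, y)) (fun v => F (v, y)) x :=
    mul_le_mul_of_nonneg_right (min_le_left _ _) hg1
  have hm2 : min k₁ k₂ * gam H (fun w => F (x, w)) (fun w => F (x, w)) y
      ≤ k₂ * gam H (fun w => F (x, w)) (fun w => F (x, w)) y :=
    mul_le_mul_of_nonneg_right (min_le_right _ _) hg2
  rw [ge_iff_le, hlap, hgam]
  have hdist : min k₁ k₂ * (gam G (fun v => F (v, y)) (fun v => F (v, y)) x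
      + gam H (fun w => F (x, w)) (fun w => F (x, w)) y)
      = min k₁ k₂ * gam G (fun v => F (v, y)) (fun v => F (v, y)) x
        + min k₁ k₂ * gam H (fun w => F (x, w)) (fun w => F (x, w)) y := by ring
  linarith [hinv, h1, h2, hbox]
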